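/- Let n ≥ 1, let p be an integer with 1 ≤ p ≤ n, let A be an n×n real matrix, and let (D_p^k)_{k≥0} be the associated over-approximation sequence. If x ∈ ℝⁿ and λ ∈ ℝ satisfy (A ⊗_p x)_i = λ + x_i for all i, then x ∈ Zone(D_p^k) for every k ≥ 0. That is, the maxmin-ω eigenspace E_p(A) is contained in every zone Z_p^k (and hence in the stabilized zone). -/

import Mathlib

/-- The maxmin-`p` value of `s : Fin n → ℝ`: the `p`-th smallest element (1-indexed) of the
multiset `{s 0, …, s (n-1)}`, counted with multiplicity. -/
noncomputable def maxmin {n : ℕ} (p : ℕ) (s : Fin n → ℝ) : ℝ :=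
  (Multiset.sort (Multiset.map s (Finset.univ : Finset (Fin n)).val) (· ≤ ·)).getD (p - 1) 0

/-- The maxmin-`p` matrix-vector product: `(A ⊗_p x)_i = ⊕_p (j ↦ A i j + x j)`. -/
noncomputable def mmProd {n : ℕ} (p : ℕ) (A : Fin n → Fin n → ℝ) (x : Fin n → ℝ) :
    Fin n → ℝ :=
  fun i => maxmin p (fun j => A i j + x j)
/-- `MinMaxValue(F | p, n+1−p)`: the minimum over all pairs `(S₁, S₂)` of subsets of
`{1,…,n}` with `|S₁| = p` and `|S₂| = n+1−p` of `max_{(i,j) ∈ S₁×S₂} F i j`, where the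
entries lie in `ℝ ∪ {−∞}` (modeled as `WithBot ℝ`). -/
noncomputable def minMaxValue {n : ℕ} (p : ℕ) (F : Fin n → Fin n → WithBot ℝ) : WithBot ℝ :=
  sInf {v : WithBot ℝ | ∃ S₁ S₂ : Finset (Fin n), S₁.card = p ∧ S₂.card = n + 1 - p ∧
    v = (S₁ ×ˢ S₂).sup (fun q => F q.1 q.2)}

/-- The over-approximation sequence `(D_p^k)_{k ≥ 0}` associated with `A`: `D_p^0` is the
max-plus identity matrix and
`D_p^{k+1}(i,j) = MinMaxValue((l,m) ↦ A i l − A j m + D_p^k l m | p, n+1−p)`. -/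
noncomputable def Dseq {n : ℕ} (A : Fin n → Fin n → ℝ) (p : ℕ) :
    ℕ → Fin n → Fin n → WithBot ℝ
  | 0 => fun i j => if i = j then 0 else ⊥
  | (k + 1) => fun i j =>
      minMaxValue p (fun l m => ((A i l - A j m : ℝ) : WithBot ℝ) + Dseq A p k l m)

/-- The zone of a DBM `D` over `ℝ ∪ {−∞}`: all real vectors `x` with
`x i − x j ≥ D i j` for all `i, j`. -/
def zone {n : ℕ} (D : Fin n → Fin n → WithBot ℝ) : Set (Fin n → ℝ) :=
  {x | ∀ i j, D i j ≤ ((x i - x j : ℝ) : WithBot ℝ)}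




lemma countP_filter_card {n : ℕ} (P : ℝ → Prop) [DecidablePred P] (s : Fin n → ℝ) :
    (Finset.univ.filter (fun j => P (s j))).card
      = (Multiset.sort (Multiset.map s (Finset.univ : Finset (Fin n)).val) (· ≤ ·)).countP
          (fun a => decide (P a)) := by
  have h1 : ((Multiset.sort (Multiset.map s (Finset.univ : Finset (Fin n)).val) (· ≤ ·)  : List ℝ) : Multiset ℝ) = Multiset.map s Finset.univ.val := Multiset.sort_eq _ _
  have h2 : Multiset.countP P (Multiset.map s Finset.univ.val)
      = (Multiset.sort (Multiset.map s (Finset.univ : Finset (Fin n)).val) (· ≤ ·)).countP (fun a => decide (P a)) := by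
    rw [← Multiset.coe_countP, h1]
  rw [← h2, Multiset.countP_map]
  rfl

lemma maxmin_lower {n p : ℕ} (hp1 : 1 ≤ p) (hpn : p ≤ n) (s : Fin n → ℝ) :
    ∃ S : Finset (Fin n), S.card = p ∧ ∀ j ∈ S, s j ≤ maxmin p s := by
  set L := Multiset.sort (Multiset.map s (Finset.univ : Finset (Fin n)).val) (· ≤ ·) with hLdef
  have hsort : L.Pairwise (· ≤ ·) := Multiset.pairwise_sort _ _
  have hlen : L.length = n := by
    rw [hLdef, Multiset.length_sort, Multiset.card_map]
    simp
  have hlt : p - 1 < L.length := by omega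
  have hv : maxmin p s = L.get ⟨p - 1, hlt⟩ := by
    rw [maxmin, ← hLdef, List.getD_eq_getElem _ _ hlt]; rfl
  -- count of elements ≤ v is at least p
  have hcount : p ≤ L.countP (fun a => decide (a ≤ maxmin p s)) := by
    have hsplit : L.countP (fun a => decide (a ≤ maxmin p s))
        = (L.take p).countP (fun a => decide (a ≤ maxmin p s))
          + (L.drop p).countP (fun a => decide (a ≤ maxmin p s)) := by
      rw [← List.countP_append, List.take_append_drop]
    have hall : ∀ a ∈ L.take p, decide (a ≤ maxmin p s) = true := by
      intro a ha
      rw [List.mem_take_iff_getElem] at ha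
      obtain ⟨i, hi, rfl⟩ := ha
      have hi' : i < L.length := lt_of_lt_of_le (lt_of_lt_of_le hi inf_le_left |>.trans_le hpn) hlen.ge
      simp only [decide_eq_true_eq, hv]
      exact hsort.rel_get_of_le (a := ⟨i, hi'⟩) (b := ⟨p - 1, hlt⟩) (by simp; omega)
    have : (L.take p).countP (fun a => decide (a ≤ maxmin p s)) = (L.take p).length :=
      List.countP_eq_length.mpr hall
    rw [hsplit, this, List.length_take]
    omega
  have hcard : p ≤ (Finset.univ.filter (fun j => s j ≤ maxmin p s)).card := by
    rw [countP_filter_card (fun a => a ≤ maxmin p s) s]; exact hcount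
  obtain ⟨S, hS, hScard⟩ := Finset.exists_subset_card_eq hcard
  exact ⟨S, hScard, fun j hj => (Finset.mem_filter.mp (hS hj)).2⟩

lemma maxmin_upper {n p : ℕ} (hp1 : 1 ≤ p) (hpn : p ≤ n) (s : Fin n → ℝ) :
    ∃ S : Finset (Fin n), S.card = n + 1 - p ∧ ∀ m ∈ S, maxmin p s ≤ s m := by
  set L := Multiset.sort (Multiset.map s (Finset.univ : Finset (Fin n)).val) (· ≤ ·) with hLdef
  have hsort : L.Pairwise (· ≤ ·) := Multiset.pairwise_sort _ _
  have hlen : L.length = n := by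
    rw [hLdef, Multiset.length_sort, Multiset.card_map]
    simp
  have hlt : p - 1 < L.length := by omega
  have hv : maxmin p s = L.get ⟨p - 1, hlt⟩ := by
    rw [maxmin, ← hLdef, List.getD_eq_getElem _ _ hlt]; rfl
  have hcount : n + 1 - p ≤ L.countP (fun a => decide (maxmin p s ≤ a)) := by
    have hsplit : L.countP (fun a => decide (maxmin p s ≤ a))
        = (L.take (p-1)).countP (fun a => decide (maxmin p s ≤ a))
          + (L.drop (p-1)).countP (fun a => decide (maxmin p s ≤ a)) := by
      rw [← List.countP_append, List.take_append_drop]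
    have hall : ∀ a ∈ L.drop (p-1), decide (maxmin p s ≤ a) = true := by
      intro a ha
      obtain ⟨i, hi, rfl⟩ := List.getElem_of_mem ha
      rw [List.getElem_drop] at *
      simp only [decide_eq_true_eq, hv]
      have hi' : p - 1 + i < L.length := by
        rw [List.length_drop] at hi; omega
      exact hsort.rel_get_of_le (a := ⟨p - 1, hlt⟩) (b := ⟨p - 1 + i, hi'⟩) (by simp)
    have : (L.drop (p-1)).countP (fun a => decide (maxmin p s ≤ a)) = (L.drop (p-1)).length :=
      List.countP_eq_length.mpr hall
    rw [hsplit, this, List.length_drop]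
    omega
  have hcard : n + 1 - p ≤ (Finset.univ.filter (fun j => maxmin p s ≤ s j)).card := by
    rw [countP_filter_card (fun a => maxmin p s ≤ a) s]; exact hcount
  obtain ⟨S, hS, hScard⟩ := Finset.exists_subset_card_eq hcard
  exact ⟨S, hScard, fun j hj => (Finset.mem_filter.mp (hS hj)).2⟩

/-- Every maxmin-`p` eigenvector of `A` lies in every zone `Z_p^k = Zone(D_p^k)`:
the eigenspace `E_p(A)` is contained in each over-approximating zone. -/
theorem eigenspace_subset_zones (n p : ℕ) (hn : 1 ≤ n) (hp1 : 1 ≤ p) (hpn : p ≤ n)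
    (A : Fin n → Fin n → ℝ) (x : Fin n → ℝ) (lam : ℝ)
    (hx : ∀ i, mmProd p A x i = lam + x i) :
    ∀ k : ℕ, x ∈ zone (Dseq A p k) := by
  intro k
  induction k with
  | zero =>
    intro i j
    simp only [Dseq]
    split
    · next h => subst h; simp
    · exact bot_le
  | succ k ih =>
    intro i j
    have hi := hx i
    have hj := hx j
    simp only [mmProd] at hi hj
    obtain ⟨S₁, hS₁c, hS₁⟩ := maxmin_lower hp1 hpn (fun l => A i l + x l)
    obtain ⟨S₂, hS₂c, hS₂⟩ := maxmin_upper hp1 hpn (fun m => A j m + x m)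
    rw [hi] at hS₁
    rw [hj] at hS₂
    simp only [Dseq, minMaxValue]
    refine le_trans (csInf_le (OrderBot.bddBelow _) ⟨S₁, S₂, hS₁c, hS₂c, rfl⟩) ?_
    refine Finset.sup_le ?_
    rintro ⟨l, m⟩ hq
    rw [Finset.mem_product] at hq
    have hl := hS₁ l hq.1
    have hm := hS₂ m hq.2
    have hD := ih l m
    calc ((A i l - A j m : ℝ) : WithBot ℝ) + Dseq A p k l m
        ≤ ((A i l - A j m : ℝ) : WithBot ℝ) + ((x l - x m : ℝ) : WithBot ℝ) :=
          add_le_add_right hD _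
      _ = ((A i l - A j m + (x l - x m) : ℝ) : WithBot ℝ) := (WithBot.coe_add _ _).symm
      _ ≤ ((x i - x j : ℝ) : WithBot ℝ) := by
          rw [WithBot.coe_le_coe]; linarith
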